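/- Let M be a monotone Möbius structure on S¹ and let b, b' be two pairs of distinct points of S¹ in the strong causal relation. Then there exists a common perpendicular: a pair a=(x,y) such that both (a,b) and (a,b') are harmonic. -/

import Mathlib

open scoped Classical

section Mobius

variable {X : Type*}

/-- The pairs `(x,y)` and `(z,u)` separate each other on the circularly ordered set `X`:
`z` and `u` lie on different open arcs determined by `x` and `y`. -/
def PairSeparates [CircularOrder X] (x y z u : X) : Prop :=
  (sbtw x z y ∧ sbtw y u x) ∨ (sbtw x u y ∧ sbtw y z x)

/-- The pair `(d₁,d₂)` separates the pairs `(b₁,b₂)` and `(c₁,c₂)`: the latter two pairs lie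
on different open arcs determined by `(d₁,d₂)`. -/
def ArcSepPairs [CircularOrder X] (d₁ d₂ b₁ b₂ c₁ c₂ : X) : Prop :=
  (sbtw d₁ b₁ d₂ ∧ sbtw d₁ b₂ d₂ ∧ sbtw d₂ c₁ d₁ ∧ sbtw d₂ c₂ d₁) ∨
  (sbtw d₁ c₁ d₂ ∧ sbtw d₁ c₂ d₂ ∧ sbtw d₂ b₁ d₁ ∧ sbtw d₂ b₂ d₁)

/-- Two pairs `(b₁,b₂)` and `(c₁,c₂)` of points are in the strong causal relation:
either of them lies entirely in one open arc determined by the other. -/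
def StrongCausal [CircularOrder X] (b₁ b₂ c₁ c₂ : X) : Prop :=
  (sbtw b₁ c₁ b₂ ∧ sbtw b₁ c₂ b₂) ∨ (sbtw b₂ c₁ b₁ ∧ sbtw b₂ c₂ b₁) ∨
  (sbtw c₁ b₁ c₂ ∧ sbtw c₁ b₂ c₂) ∨ (sbtw c₂ b₁ c₁ ∧ sbtw c₂ b₂ c₁)

/-- The topology generated by open balls of the semi-metrics with infinitely remote points,
centered at finite points. `D ω x y` denotes `|xy|` in the semi-metric with infinitely remote
point `ω`. -/
def MTopology (D : X → X → X → ℝ) : TopologicalSpace X :=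
  TopologicalSpace.generateFrom
    {s | ∃ ω x r, x ≠ ω ∧ s = {y | y ≠ ω ∧ D ω x y < r}}

/-- A (ptolemaic) monotone Möbius structure on a circle `X`, presented by the family of its
semi-metrics with infinitely remote points: `D ω x y` is the distance `|xy|_ω` in the
semi-metric with infinitely remote point `ω` (defined for `x, y ≠ ω`).  The semi-metrics
are pairwise related by metric inversion (up to homothety), every one of them satisfies the
Ptolemy inequality, the monotonicity axiom (M) holds, the M-topology is the given topology
of `X`, and `X` is homeomorphic to the circle. -/
structure MonotoneMobius (X : Type*) [CircularOrder X] [t : TopologicalSpace X] where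
  D : X → X → X → ℝ
  symm : ∀ ω x y, D ω x y = D ω y x
  refl : ∀ ω x, D ω x x = 0
  pos : ∀ ω x y, x ≠ y → x ≠ ω → y ≠ ω → 0 < D ω x y
  inversion : ∀ ω ω', ω ≠ ω' → ∃ c : ℝ, 0 < c ∧ ∀ x y, x ≠ ω → y ≠ ω → x ≠ ω' → y ≠ ω' →
    D ω' x y = c * D ω x y / (D ω x ω' * D ω y ω')
  ptolemy : ∀ ω x y z u, x ≠ ω → y ≠ ω → z ≠ ω → u ≠ ω →
    D ω x y * D ω z u ≤ D ω x z * D ω y u + D ω x u * D ω y z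
  mono : ∀ ω x y z u, x ≠ ω → y ≠ ω → z ≠ ω → u ≠ ω → PairSeparates x y z u →
    D ω x z * D ω y u < D ω x y * D ω z u ∧ D ω x u * D ω y z < D ω x y * D ω z u
  mtop : MTopology D = t
  circle : Nonempty (X ≃ₜ AddCircle (1 : ℝ))

variable [CircularOrder X] [TopologicalSpace X]

/-- The 4-tuple `(x,y,z,u)` is harmonic (of the first type): `|xz||yu| = |xu||yz|` in any
semi-metric of the Möbius structure. -/
def MonotoneMobius.Harmonic (M : MonotoneMobius X) (x y z u : X) : Prop :=
  ∀ ω, ω ≠ x → ω ≠ y → ω ≠ z → ω ≠ u →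
    M.D ω x z * M.D ω y u = M.D ω x u * M.D ω y z

/-- The distance `|q q'| = |ln ((|xp'||yp|)/(|xp||yp'|))|` between two harmonic pairs
`q = ((x,y),(p,·))` and `q' = ((x,y),(p',·))` with common axis `(x,y)`; computed here in the
semi-metric with infinitely remote point `x`, where it equals `|ln (|yp|_x / |yp'|_x)|`. -/
noncomputable def MonotoneMobius.lineDist (M : MonotoneMobius X) (x y p p' : X) : ℝ :=
  |Real.log (M.D x y p / M.D x y p')|

end Mobius



section OrdUtil
variable {X : Type*} [CircularOrder X]

lemma my_strictify {a b c : X} (h : btw a b c) (h1 : a ≠ b) (h2 : b ≠ c) (h3 : a ≠ c) :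
    sbtw a b c := by
  rw [sbtw_iff_btw_not_btw]
  refine ⟨h, fun hc => ?_⟩
  rcases h.antisymm hc with h' | h' | h' <;> [exact h1 h'; exact h2 h'; exact h3 h'.symm]

lemma my_sbtw_ne₁₂ {a b c : X} (h : sbtw a b c) : a ≠ b := fun he => by
  subst he; exact sbtw_irrefl_left h
lemma my_sbtw_ne₂₃ {a b c : X} (h : sbtw a b c) : b ≠ c := fun he => by
  subst he; exact sbtw_irrefl_right h
lemma my_sbtw_ne₁₃ {a b c : X} (h : sbtw a b c) : a ≠ c := fun he => by
  subst he; exact sbtw_irrefl_left_right h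

-- not btw c b a from sbtw
lemma my_sbtw_not_btw {a b c : X} (h : sbtw a b c) : ¬ btw c b a := not_btw_of_sbtw h

lemma my_not_btw_sbtw {a b c : X} (h : ¬ btw c b a) : sbtw a b c := sbtw_iff_not_btw.mpr h

/-- the four cyclic sbtw facts of a cyclically ordered 4-tuple -/
structure Cyc4 (a b c d : X) : Prop where
  h1 : sbtw a b c
  h2 : sbtw b c d
  h3 : sbtw c d a
  h4 : sbtw d a b

namespace Cyc4
variable {a b c d : X}

lemma rot (h : Cyc4 a b c d) : Cyc4 b c d a := ⟨h.h2, h.h3, h.h4, h.h1⟩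

lemma habd (h : Cyc4 a b c d) : sbtw a b d := sbtw_cyclic_left h.h4
lemma hacd (h : Cyc4 a b c d) : sbtw a c d := sbtw_cyclic_left (sbtw_cyclic_left h.h3)

end Cyc4

/-- build Cyc4 from: z' and u' strictly inside arc (z,u), with btw z z' u' -/
lemma cyc4_build {z u z' u' : X} (s1 : sbtw z z' u) (s2 : sbtw z u' u)
    (t : btw z z' u') (hne : z' ≠ u') : Cyc4 z z' u' u := by
  have hzz' : z ≠ z' := my_sbtw_ne₁₂ s1
  have hzu' : z ≠ u' := my_sbtw_ne₁₂ s2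
  have h1 : sbtw z z' u' := my_strictify t hzz' hne hzu'
  have h2 : sbtw z' u' u := by
    by_contra hcon
    have hb : btw u u' z' := by
      by_contra hb2
      exact hcon (my_not_btw_sbtw hb2)
    have h5 : sbtw u u' z' :=
      my_strictify hb (my_sbtw_ne₂₃ s2).symm hne.symm (my_sbtw_ne₂₃ s1).symm
    have e1 : sbtw u' z z' := sbtw_cyclic_left (sbtw_cyclic_left h1)
    have e2 : sbtw u' z' u := sbtw_cyclic_left h5
    have e3 : sbtw u' z u := sbtw_trans_right e1 e2
    have e4 : sbtw u' u z := sbtw_cyclic_left s2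
    exact sbtw_irrefl_right (sbtw_trans_right e3 e4)
  exact ⟨h1, h2, sbtw_cyclic_left s2, sbtw_cyclic_left (sbtw_cyclic_left s1)⟩
end OrdUtil

section More
variable {X : Type*} [CircularOrder X]

/-- `[b,c]` and `[d,a]` are disjoint for a cyclic 4-tuple `(a,b,c,d)`. -/
lemma cyc4_disj {a b c d p : X} (h : Cyc4 a b c d) (hp1 : btw b p c) (hp2 : btw d p a) :
    False := by
  have nab := my_sbtw_ne₁₂ h.h1; have nbc := my_sbtw_ne₂₃ h.h1; have nac := my_sbtw_ne₁₃ h.h1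
  have ncd := my_sbtw_ne₂₃ h.h2; have nbd := my_sbtw_ne₁₃ h.h2
  have nda := my_sbtw_ne₂₃ h.h3
  rcases eq_or_ne p b with rfl | hpb
  · exact my_sbtw_not_btw h.h4 (btw_cyclic_left hp2)
  rcases eq_or_ne p c with rfl | hpc
  · exact my_sbtw_not_btw h.h3 (btw_cyclic_left (btw_cyclic_left hp2))
  rcases eq_or_ne p d with rfl | hpd
  · exact my_sbtw_not_btw h.h2 (btw_cyclic_left hp1)
  rcases eq_or_ne p a with rfl | hpa
  · exact my_sbtw_not_btw h.h1 (btw_cyclic_left (btw_cyclic_left hp1))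
  have s1 : sbtw b p c := my_strictify hp1 (Ne.symm hpb) hpc nbc
  have s2 : sbtw d p a := my_strictify hp2 (Ne.symm hpd) hpa nda
  have e1 : sbtw d p b := sbtw_trans_right s2 h.h4
  have e2 : sbtw b p d := sbtw_trans_right s1 h.h2
  exact my_sbtw_not_btw e1 (btw_of_sbtw e2)

/-- `[a,b] ∩ [b,c] ⊆ {b}`-type fact: a point strictly inside `(a,b)` is not in `[b,c]`. -/
lemma cyc4_disj2a {a b c d p : X} (h : Cyc4 a b c d) (hp : sbtw a p b) (hc : btw b p c) :
    False := by
  have hpa := my_sbtw_ne₁₂ hp; have hpb := my_sbtw_ne₂₃ hp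
  have nbc := my_sbtw_ne₂₃ h.h1
  have hbda : sbtw b d a := sbtw_cyclic_left (sbtw_cyclic_left h.h4)
  rcases eq_or_ne p c with rfl | hpc
  · exact sbtw_irrefl_right (sbtw_trans_right h.h1 hp)
  rcases eq_or_ne p d with rfl | hpd
  · exact sbtw_irrefl_right (sbtw_trans_right (sbtw_cyclic_left h.h4) hp)
  have s1 : sbtw b p c := my_strictify hc hpb.symm hpc nbc
  have hbca : sbtw b c a := sbtw_trans_right h.h2 hbda
  have : sbtw b p a := sbtw_trans_right s1 hbca
  exact my_sbtw_not_btw hp (btw_of_sbtw this)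

/-- a point strictly inside `(a,b)` is not in `[d,a]`. -/
lemma cyc4_disj2b {a b c d p : X} (h : Cyc4 a b c d) (hp : sbtw a p b) (hc : btw d p a) :
    False := by
  have hpa := my_sbtw_ne₁₂ hp; have hpb := my_sbtw_ne₂₃ hp
  have nda := my_sbtw_ne₂₃ h.h3
  have hbda : sbtw b d a := sbtw_cyclic_left (sbtw_cyclic_left h.h4)
  rcases eq_or_ne p c with rfl | hpc
  · exact sbtw_irrefl_right (sbtw_trans_right h.h1 hp)
  rcases eq_or_ne p d with rfl | hpd
  · exact sbtw_irrefl_right (sbtw_trans_right (sbtw_cyclic_left h.h4) hp)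
  have s2 : sbtw d p a := my_strictify hc hpd.symm hpa.symm nda
  have : sbtw b p a := SBtw.sbtw.trans_left hbda s2
  exact my_sbtw_not_btw hp (btw_of_sbtw this)

/-- `[b,m] ∩ [m,a] = {m}` when `sbtw b m a`. -/
lemma int5 {a b m p : X} (hm : sbtw b m a) (h1 : btw m p a) (h2 : btw b p m) (hpm : p ≠ m) :
    False := by
  have hbm := my_sbtw_ne₁₂ hm; have hma := my_sbtw_ne₂₃ hm; have hba := my_sbtw_ne₁₃ hm
  rcases eq_or_ne p a with rfl | hpa
  · exact my_sbtw_not_btw hm (btw_cyclic_left h2)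
  rcases eq_or_ne p b with rfl | hpb
  · exact my_sbtw_not_btw hm (btw_cyclic_left (btw_cyclic_left h1))
  have s1 : sbtw m p a := my_strictify h1 hpm.symm hpa hma
  have s2 : sbtw b p m := my_strictify h2 hpb.symm hpm hbm
  have hmab : sbtw m a b := sbtw_cyclic_left hm
  exact my_sbtw_not_btw s2 (btw_of_sbtw (sbtw_trans_right s1 hmab))

/-- `[a,b] ∩ [b,m] = {b}` when `sbtw b m a`. -/
lemma int1 {a b m p : X} (hm : sbtw b m a) (h1 : btw a p b) (h2 : btw b p m) : p = b := by
  have hbm := my_sbtw_ne₁₂ hm; have hma := my_sbtw_ne₂₃ hm; have hba := my_sbtw_ne₁₃ hm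
  by_contra hpb
  rcases eq_or_ne p a with rfl | hpa
  · exact my_sbtw_not_btw hm (btw_cyclic_left h2)
  rcases eq_or_ne p m with rfl | hpm
  · exact my_sbtw_not_btw hm h1
  have s1 : sbtw a p b := my_strictify h1 hpa.symm hpb hba.symm
  have s2 : sbtw b p m := my_strictify h2 (Ne.symm hpb) hpm hbm
  exact my_sbtw_not_btw s1 (btw_of_sbtw (sbtw_trans_right s2 hm))

/-- `[a,b] ∩ [m,a] = {a}` when `sbtw b m a`. -/
lemma int2 {a b m p : X} (hm : sbtw b m a) (h1 : btw a p b) (h2 : btw m p a) : p = a := by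
  have hbm := my_sbtw_ne₁₂ hm; have hma := my_sbtw_ne₂₃ hm; have hba := my_sbtw_ne₁₃ hm
  by_contra hpa
  rcases eq_or_ne p b with rfl | hpb
  · exact my_sbtw_not_btw hm (btw_cyclic_left (btw_cyclic_left h2))
  rcases eq_or_ne p m with rfl | hpm
  · exact my_sbtw_not_btw hm h1
  have s1 : sbtw a p b := my_strictify h1 (Ne.symm hpa) hpb hba.symm
  have s2 : sbtw m p a := my_strictify h2 hpm.symm hpa hma
  have habm : sbtw a b m := sbtw_cyclic_left (sbtw_cyclic_left hm)
  exact my_sbtw_not_btw s2 (btw_of_sbtw (sbtw_trans_right s1 habm))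

/-- dichotomy for points of the complementary open arc. -/
lemma int4 {a b m p : X} (hm : sbtw b m a) (hp : sbtw b p a) (hpm : p ≠ m) :
    btw b p m ∨ btw m p a := by
  have hbm := my_sbtw_ne₁₂ hm; have hma := my_sbtw_ne₂₃ hm
  have hbp := my_sbtw_ne₁₂ hp; have hpa := my_sbtw_ne₂₃ hp
  rcases btw_total b p m with hbpm | hmpb
  · exact Or.inl hbpm
  right
  by_contra hcon
  have s1 : sbtw a p m := my_not_btw_sbtw hcon
  have s2 : sbtw m p b := my_strictify hmpb hpm.symm hbp.symm hbm.symm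
  have e1 : sbtw p m a := sbtw_cyclic_left s1
  have e2 : sbtw p b m := sbtw_cyclic_left s2
  have : sbtw p b a := sbtw_trans_right e2 e1
  exact my_sbtw_not_btw this (btw_cyclic_left (btw_cyclic_left (btw_of_sbtw hp)))
end More

section Met
open Set Filter Topology

variable {X : Type*} [CircularOrder X] [TopologicalSpace X] (M : MonotoneMobius X)

lemma exists_ne4 {X : Type*} [Infinite X] (a b c d : X) :
    ∃ p : X, p ≠ a ∧ p ≠ b ∧ p ≠ c ∧ p ≠ d := by
  classical
  obtain ⟨p, hp⟩ := Infinite.exists_notMem_finset ({a,b,c,d} : Finset X)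
  simp only [Finset.mem_insert, Finset.mem_singleton, not_or] at hp
  exact ⟨p, hp.1, hp.2.1, hp.2.2.1, hp.2.2.2⟩


lemma M_ball_open (ω x : X) (r : ℝ) (hx : x ≠ ω) :
    IsOpen {y | y ≠ ω ∧ M.D ω x y < r} := by
  have h : IsOpen[MTopology M.D] {y | y ≠ ω ∧ M.D ω x y < r} :=
    TopologicalSpace.GenerateOpen.basic _ ⟨ω, x, r, hx, rfl⟩
  rwa [M.mtop] at h

lemma M_nonneg (ω x y : X) (hx : x ≠ ω) (hy : y ≠ ω) : 0 ≤ M.D ω x y := by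
  rcases eq_or_ne x y with rfl | h
  · rw [M.refl]
  · exact (M.pos ω x y h hx hy).le

lemma M_prodK [Infinite X] {ω x : X} (hxw : x ≠ ω) :
    ∃ K : ℝ, 0 < K ∧ ∀ y, y ≠ ω → y ≠ x → M.D ω x y * M.D x ω y = K := by
  obtain ⟨c, hc, hcf⟩ := M.inversion ω x (Ne.symm hxw)
  obtain ⟨c', hc', hcf'⟩ := M.inversion x ω hxw
  have key : ∀ s, s ≠ ω → s ≠ x → ∀ y, y ≠ ω → y ≠ x → y ≠ s →
      M.D ω x y * M.D x ω y = c * c' / (M.D ω s x * M.D x s ω) := by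
    intro s hsw hsx y hyw hyx hys
    have h1 : M.D ω y s = c' * M.D x y s / (M.D x y ω * M.D x s ω) :=
      hcf' y s hyx hsx hyw hsw
    have h2 : M.D x y s = c * M.D ω y s / (M.D ω y x * M.D ω s x) :=
      hcf y s hyw hsw hyx hsx
    have pys : (0:ℝ) < M.D ω y s := M.pos ω y s hys hyw hsw
    have pyx : (0:ℝ) < M.D ω y x := M.pos ω y x hyx hyw hxw
    have psx : (0:ℝ) < M.D ω s x := M.pos ω s x hsx hsw hxw
    have pyw : (0:ℝ) < M.D x y ω := M.pos x y ω hyw hyx (Ne.symm hxw)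
    have psw : (0:ℝ) < M.D x s ω := M.pos x s ω hsw hsx (Ne.symm hxw)
    rw [h2] at h1
    rw [M.symm ω x y, M.symm x ω y]
    field_simp at h1
    have h5 : M.D ω y s * (M.D ω y x * M.D x y ω * (M.D ω s x * M.D x s ω))
        = M.D ω y s * (c * c') := by linear_combination (M.D ω y s) * h1
    have h6 := mul_left_cancel₀ (ne_of_gt pys) h5
    rw [eq_div_iff (by positivity)]
    linear_combination h6
  obtain ⟨s, hs1, hs2, -, -⟩ := exists_ne4 ω x ω x
  have psx : (0:ℝ) < M.D ω s x := M.pos ω s x hs2 hs1 hxw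
  have psw : (0:ℝ) < M.D x s ω := M.pos x s ω hs1 hs2 (Ne.symm hxw)
  refine ⟨c * c' / (M.D ω s x * M.D x s ω), by positivity, fun y hyw hyx => ?_⟩
  rcases eq_or_ne y s with rfl | hys
  · obtain ⟨s', hs1', hs2', hs3', -⟩ := exists_ne4 ω x y y
    obtain ⟨y', hy1', hy2', hy3', hy4'⟩ := exists_ne4 ω x y s'
    have e1 := key s' hs1' hs2' y hyw hyx (Ne.symm hs3')
    have e2 := key s' hs1' hs2' y' hy1' hy2' hy4'
    have e3 := key y hyw hyx y' hy1' hy2' hy3'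
    rw [e1, ← e2, e3]
  · exact key s hs1 hs2 y hyw hyx hys

end Met

section Cont
open Set Filter Topology
variable {X : Type*} [CircularOrder X] [TopologicalSpace X] (M : MonotoneMobius X)

lemma M_contAt [Infinite X] [T1Space X] {ω x y₀ : X} (hxw : x ≠ ω) (hy0 : y₀ ≠ ω) :
    ContinuousAt (fun y => M.D ω x y) y₀ := by
  rw [ContinuousAt, Metric.tendsto_nhds]
  intro ε hε
  rcases eq_or_ne y₀ x with rfl | hyx
  · -- at the zero of D
    have hU : IsOpen {y | y ≠ ω ∧ M.D ω y₀ y < ε} := M_ball_open M ω y₀ ε hy0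
    have hy : y₀ ∈ {y | y ≠ ω ∧ M.D ω y₀ y < ε} := ⟨hy0, by rw [M.refl]; exact hε⟩
    filter_upwards [hU.mem_nhds hy] with y hy
    rw [Real.dist_eq, M.refl, sub_zero, abs_of_nonneg (M_nonneg M ω y₀ y hy0 hy.1)]
    exact hy.2
  · have v_pos : 0 < M.D ω x y₀ := M.pos ω x y₀ (Ne.symm hyx) hxw hy0
    set v := M.D ω x y₀ with hv
    obtain ⟨K, hK, hKf⟩ := M_prodK M hxw
    have hUup : IsOpen {y | y ≠ ω ∧ M.D ω x y < v + ε} := M_ball_open M ω x _ hxw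
    have hyup : y₀ ∈ {y | y ≠ ω ∧ M.D ω x y < v + ε} := ⟨hy0, by linarith⟩
    have hney : ∀ᶠ y in 𝓝 y₀, y ≠ x := IsOpen.eventually_mem isOpen_ne hyx
    rcases le_or_gt v ε with hve | hve
    · -- lower bound trivial
      filter_upwards [hUup.mem_nhds hyup, hney] with y hy hyx'
      have hpos : 0 < M.D ω x y := M.pos ω x y (Ne.symm hyx') hxw hy.1
      rw [Real.dist_eq, abs_lt]
      constructor <;> [linarith; linarith [hy.2]]
    · -- lower bound via K
      have hKy0 := hKf y₀ hy0 hyx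
      have hDx : 0 < M.D x ω y₀ := M.pos x ω y₀ (Ne.symm hy0) (Ne.symm hxw) hyx
      have hlow : IsOpen {y | y ≠ x ∧ M.D x ω y < K / (v - ε)} :=
        M_ball_open M x ω _ (Ne.symm hxw)
      have hylow : y₀ ∈ {y | y ≠ x ∧ M.D x ω y < K / (v - ε)} := by
        refine ⟨hyx, ?_⟩
        have h1 : M.D x ω y₀ = K / v := by
          field_simp at hKy0 ⊢
          linarith [hKy0]
        rw [h1]
        exact div_lt_div_of_pos_left hK (by linarith) (by linarith)
      filter_upwards [hUup.mem_nhds hyup, hlow.mem_nhds hylow, hney] with y h1 h2 _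
      have hy1 := hKf y h1.1 h2.1
      have hDxy : 0 < M.D x ω y := M.pos x ω y (Ne.symm h1.1) (Ne.symm hxw) h2.1
      have hgt : v - ε < M.D ω x y := by
        have hlt : M.D x ω y < K / (v - ε) := h2.2
        have : K / (K / (v - ε)) < K / M.D x ω y :=
          div_lt_div_of_pos_left hK hDxy hlt
        have hsimp : K / (K / (v - ε)) = v - ε := by
          field_simp
        rw [hsimp] at this
        have : v - ε < K / M.D x ω y := this
        have hKy : M.D ω x y = K / M.D x ω y := by
          field_simp
          linarith [hy1]
        linarith [hKy ▸ this]
      rw [Real.dist_eq, abs_lt]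
      exact ⟨by linarith, by linarith [h1.2]⟩
end Cont

section Top
open Set Filter Topology
variable {X : Type*} [CircularOrder X] [TopologicalSpace X]

noncomputable def M_homeo (M : MonotoneMobius X) : X ≃ₜ AddCircle (1:ℝ) := M.circle.some

lemma AC_infinite : Infinite (AddCircle (1:ℝ)) := by
  haveI : Fact ((0:ℝ) < 1) := ⟨one_pos⟩
  haveI := Set.Ioo.infinite (show (0:ℝ) < 1 by norm_num)
  exact Infinite.of_injective (fun r : Set.Ioo (0:ℝ) 1 => ((r : ℝ) : AddCircle (1:ℝ))) (by
    rintro ⟨x, hx⟩ ⟨y, hy⟩ h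
    have hx' : x ∈ Set.Ico (0:ℝ) (0+1) := ⟨hx.1.le, by simpa using hx.2⟩
    have hy' : y ∈ Set.Ico (0:ℝ) (0+1) := ⟨hy.1.le, by simpa using hy.2⟩
    simpa using (AddCircle.coe_eq_coe_iff_of_mem_Ico hx' hy').mp h)

lemma AC_punct (a : AddCircle (1:ℝ)) : IsPreconnected {q : AddCircle (1:ℝ) | q ≠ a} := by
  haveI : Fact ((0:ℝ) < 1) := ⟨one_pos⟩
  set r : ℝ := ((AddCircle.equivIco (1:ℝ) 0 a : Set.Ico (0:ℝ) (0+1)) : ℝ) with hr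
  have hra : (r : AddCircle (1:ℝ)) = a := (AddCircle.equivIco (1:ℝ) 0).symm_apply_apply a
  have key : {q : AddCircle (1:ℝ) | q ≠ a}
      = (fun s : ℝ => (s : AddCircle (1:ℝ))) '' Set.Ioo r (r+1) := by
    ext q
    simp only [Set.mem_setOf_eq, Set.mem_image]
    constructor
    · intro hq
      set s : ℝ := ((AddCircle.equivIco (1:ℝ) r q : Set.Ico r (r+1)) : ℝ) with hs
      have hsq : (s : AddCircle (1:ℝ)) = q := (AddCircle.equivIco (1:ℝ) r).symm_apply_apply q
      have hmem : s ∈ Set.Ico r (r+1) := (AddCircle.equivIco (1:ℝ) r q).2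
      refine ⟨s, ⟨lt_of_le_of_ne hmem.1 ?_, hmem.2⟩, hsq⟩
      intro hrs; rw [← hrs] at hsq; rw [hra] at hsq; exact hq hsq.symm
    · rintro ⟨s, hs, rfl⟩ h
      rw [← hra] at h
      have hs' : s ∈ Set.Ico r (r+1) := ⟨hs.1.le, hs.2⟩
      have hr' : r ∈ Set.Ico r (r+1) := ⟨le_refl _, by linarith⟩
      exact hs.1.ne' ((AddCircle.coe_eq_coe_iff_of_mem_Ico hs' hr').mp h)
  rw [key]
  exact (isPreconnected_Ioo).image _ (AddCircle.continuous_mk' 1).continuousOn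

lemma M_infinite (M : MonotoneMobius X) : Infinite X := by
  haveI := AC_infinite
  exact Infinite.of_injective (M_homeo M).symm (M_homeo M).symm.injective

lemma M_t2 (M : MonotoneMobius X) : T2Space X := (M_homeo M).isEmbedding.t2Space

lemma M_compact (M : MonotoneMobius X) : CompactSpace X := by
  haveI : Fact ((0:ℝ) < 1) := ⟨one_pos⟩
  exact (M_homeo M).symm.compactSpace

lemma M_preconn (M : MonotoneMobius X) : PreconnectedSpace X := by
  haveI : PathConnectedSpace (AddCircle (1:ℝ)) := by
    haveI : Fact ((0:ℝ) < 1) := ⟨one_pos⟩; infer_instance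
  haveI : ConnectedSpace (AddCircle (1:ℝ)) := inferInstance
  constructor
  have : IsPreconnected (Set.univ : Set (AddCircle (1:ℝ))) := isPreconnected_univ
  have himg : IsPreconnected ((M_homeo M).symm '' Set.univ) :=
    this.image _ (M_homeo M).symm.continuous.continuousOn
  rwa [Set.image_univ, Homeomorph.range_coe] at himg

lemma M_punct (M : MonotoneMobius X) (m : X) : IsPreconnected {p : X | p ≠ m} := by
  have key : {p : X | p ≠ m} = (M_homeo M).symm '' {q | q ≠ (M_homeo M) m} := by
    ext p
    simp only [Set.mem_setOf_eq, Set.mem_image]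
    constructor
    · intro hp
      exact ⟨(M_homeo M) p, fun h => hp ((M_homeo M).injective h),
        (M_homeo M).symm_apply_apply p⟩
    · rintro ⟨q, hq, rfl⟩ h
      apply hq
      rw [← h, Homeomorph.apply_symm_apply]
  rw [key]
  exact (AC_punct _).image _ (M_homeo M).symm.continuous.continuousOn
end Top

section Arc
open Set Filter Topology
variable {X : Type*} [CircularOrder X] [TopologicalSpace X]

lemma M_isOpen_arc (M : MonotoneMobius X) {a b : X} (hab : a ≠ b) :
    IsOpen {p : X | sbtw a p b} := by
  haveI := M_infinite M
  haveI := M_t2 M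
  rw [isOpen_iff_mem_nhds]
  intro t ht
  obtain ⟨ω, hwa, hwb, hwt, -⟩ := exists_ne4 a b t t
  have hta : t ≠ a := (my_sbtw_ne₁₂ ht).symm
  have htb : t ≠ b := my_sbtw_ne₂₃ ht
  have hf : ContinuousAt (fun q => M.D ω b t * M.D ω a q) t :=
    (continuousAt_const.mul (M_contAt M (Ne.symm hwa) (Ne.symm hwt)))
  have hg : ContinuousAt (fun q => M.D ω b a * M.D ω t q) t :=
    (continuousAt_const.mul (M_contAt M (Ne.symm hwt) (Ne.symm hwt)))
  have hflt : (fun q => M.D ω b a * M.D ω t q) t < (fun q => M.D ω b t * M.D ω a q) t := by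
    show M.D ω b a * M.D ω t t < M.D ω b t * M.D ω a t
    rw [M.refl, mul_zero]
    exact mul_pos (M.pos ω b t htb.symm (Ne.symm hwb) (Ne.symm hwt))
      (M.pos ω a t hta.symm (Ne.symm hwa) (Ne.symm hwt))
  have hev : ∀ᶠ q in 𝓝 t, (fun q => M.D ω b a * M.D ω t q) q
      < (fun q => M.D ω b t * M.D ω a q) q := hg.eventually_lt hf hflt
  filter_upwards [hev, IsOpen.eventually_mem isOpen_ne (Ne.symm hwt : t ≠ ω),
    IsOpen.eventually_mem isOpen_ne hta, IsOpen.eventually_mem isOpen_ne htb]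
    with q hq hqw hqa hqb
  apply my_not_btw_sbtw
  intro hbqa
  have hs : sbtw b q a := my_strictify hbqa (Ne.symm hqb) hqa hab.symm
  have hsep : PairSeparates b a q t := Or.inl ⟨hs, ht⟩
  have := (M.mono ω b a q t (Ne.symm hwb) (Ne.symm hwa) hqw (Ne.symm hwt) hsep).2
  rw [M.symm ω q t] at this
  have hq' : M.D ω b a * M.D ω t q < M.D ω b t * M.D ω a q := hq
  linarith

lemma M_isClosed_arc (M : MonotoneMobius X) {a b : X} (hab : a ≠ b) :
    IsClosed {p : X | btw a p b} := by
  rw [← isOpen_compl_iff]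
  have : {p : X | btw a p b}ᶜ = {p : X | sbtw b p a} := by
    ext p
    simp only [mem_compl_iff, mem_setOf_eq]
    exact ⟨my_not_btw_sbtw, my_sbtw_not_btw⟩
  rw [this]
  exact M_isOpen_arc M hab.symm

lemma M_arc_nonempty (M : MonotoneMobius X) {a b : X} (hab : a ≠ b) : ∃ p, sbtw a p b := by
  haveI := M_infinite M
  by_contra hcon
  push_neg at hcon
  have hall : ∀ p, btw b p a := by
    intro p
    by_contra hb
    exact hcon p (my_not_btw_sbtw hb)
  obtain ⟨m, hma, hmb, -, -⟩ := exists_ne4 a b b b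
  have hm : sbtw b m a := by
    refine my_strictify (hall m) hmb.symm hma hab.symm
  have hU : IsOpen {p : X | sbtw a p m} := M_isOpen_arc M (Ne.symm hma)
  have hV : IsOpen {p : X | sbtw m p b} := M_isOpen_arc M hmb
  have hcover : {p : X | p ≠ m} ⊆ {p : X | sbtw a p m} ∪ {p : X | sbtw m p b} := by
    intro p (hpm : p ≠ m)
    by_cases hbpm : btw b p m
    · left
      apply my_not_btw_sbtw
      intro hmpa
      exact int5 hm hmpa hbpm hpm
    · right
      exact my_not_btw_sbtw hbpm
  have hbU : b ∈ {p : X | p ≠ m} ∩ {p : X | sbtw a p m} :=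
    ⟨hmb.symm, sbtw_cyclic_left (sbtw_cyclic_left hm)⟩
  have haV : a ∈ {p : X | p ≠ m} ∩ {p : X | sbtw m p b} := ⟨hma.symm, sbtw_cyclic_left hm⟩
  obtain ⟨q, hqS, hqU, hqV⟩ := M_punct M m _ _ hU hV hcover ⟨b, hbU⟩ ⟨a, haV⟩
  -- contradiction : q in both open arcs
  have hqa : q ≠ a := fun h => by subst h; exact sbtw_irrefl_left hqU
  have hqb : q ≠ b := fun h => by subst h; exact sbtw_irrefl_right hqV
  have hs : sbtw b q a := my_strictify (hall q) hqb.symm hqa hab.symm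
  rcases int4 hm hs hqS with h | h
  · exact my_sbtw_not_btw hqV h
  · exact my_sbtw_not_btw hqU h

lemma M_arc_preconn_aux (M : MonotoneMobius X) {a b m : X} (hab : a ≠ b) (hm : sbtw b m a)
    {u v : Set X} (hu : IsClosed u) (hv : IsClosed v)
    (hus : u ⊆ {p : X | btw a p b}) (hvs : v ⊆ {p : X | btw a p b})
    (hcover : {p : X | btw a p b} ⊆ u ∪ v) (hdisj : Disjoint u v)
    (hau : a ∈ u) : {p : X | btw a p b} ⊆ u ∨ {p : X | btw a p b} ⊆ v := by
  haveI := M_preconn M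
  have hmb : m ≠ b := (my_sbtw_ne₁₂ hm).symm
  have hma : m ≠ a := my_sbtw_ne₂₃ hm
  have hbmem : b ∈ {p : X | btw a p b} := btw_rfl_right
  rcases hcover hbmem with hbu | hbv
  · -- both endpoints in u : v is clopen, hence empty
    left
    have hOpen : IsOpen v := by
      have hveq : v = {p : X | sbtw a p b} ∩ uᶜ := by
        apply Subset.antisymm
        · intro q hq
          have hqu : q ∉ u := fun h => (Set.disjoint_left.mp hdisj h) hq
          have hqa : q ≠ a := fun h => by subst h; exact hqu hau
          have hqb : q ≠ b := fun h => by subst h; exact hqu hbu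
          exact ⟨my_strictify (hvs hq) hqa.symm hqb hab, hqu⟩
        · rintro q ⟨h1, h2⟩
          rcases hcover (btw_of_sbtw h1) with h | h
          · exact absurd h h2
          · exact h
      rw [hveq]
      exact (M_isOpen_arc M hab).inter hu.isOpen_compl
    rcases isClopen_iff.mp ⟨hv, hOpen⟩ with h0 | h1
    · intro p hp
      rcases hcover hp with h | h
      · exact h
      · rw [h0] at h
        exact absurd h (Set.notMem_empty p)
    · exfalso
      have : a ∈ v := by rw [h1]; trivial
      exact (Set.disjoint_left.mp hdisj hau) this
  · -- a ∈ u, b ∈ v : contradiction with punctured connectivity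
    exfalso
    have hUo : IsOpen (v ∪ {p : X | btw b p m})ᶜ :=
      (hv.union (M_isClosed_arc M hmb.symm)).isOpen_compl
    have hVo : IsOpen (u ∪ {p : X | btw m p a})ᶜ :=
      (hu.union (M_isClosed_arc M hma)).isOpen_compl
    have hcov2 : {p : X | p ≠ m} ⊆ (v ∪ {p : X | btw b p m})ᶜ ∪ (u ∪ {p : X | btw m p a})ᶜ := by
      intro p (hpm : p ≠ m)
      by_cases hp : btw a p b
      · rcases hcover hp with hpu | hpv
        · left
          rintro (hpv2 | hbpm)
          · exact (Set.disjoint_left.mp hdisj hpu) hpv2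
          · have := int1 hm hp hbpm
            subst this
            exact (Set.disjoint_left.mp hdisj hpu) hbv
        · right
          rintro (hpu2 | hmpa)
          · exact (Set.disjoint_left.mp hdisj hpu2) hpv
          · have := int2 hm hp hmpa
            subst this
            exact (Set.disjoint_left.mp hdisj hau) hpv
      · have hs : sbtw b p a := my_not_btw_sbtw hp
        rcases int4 hm hs hpm with hh | hh
        · right
          rintro (hpu2 | hmpa)
          · exact hp (hus hpu2)
          · exact int5 hm hmpa hh hpm
        · left
          rintro (hpv2 | hbpm)
          · exact hp (hvs hpv2)
          · exact int5 hm hh hbpm hpm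
    have haU : a ∈ {p : X | p ≠ m} ∩ (v ∪ {p : X | btw b p m})ᶜ := by
      refine ⟨hma.symm, ?_⟩
      rintro (hav | hbam)
      · exact (Set.disjoint_left.mp hdisj hau) hav
      · have : a = b := int1 hm btw_rfl_left hbam
        exact hab this
    have hbV : b ∈ {p : X | p ≠ m} ∩ (u ∪ {p : X | btw m p a})ᶜ := by
      refine ⟨hmb.symm, ?_⟩
      rintro (hbu2 | hmba)
      · exact (Set.disjoint_left.mp hdisj hbu2) hbv
      · have : b = a := int2 hm btw_rfl_right hmba
        exact hab this.symm
    obtain ⟨q, hqS, hqU, hqV⟩ := M_punct M m _ _ hUo hVo hcov2 ⟨a, haU⟩ ⟨b, hbV⟩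
    by_cases hq : btw a q b
    · rcases hcover hq with h | h
      · exact hqV (Or.inl h)
      · exact hqU (Or.inl h)
    · rcases int4 hm (my_not_btw_sbtw hq) hqS with h | h
      · exact hqU (Or.inr h)
      · exact hqV (Or.inr h)
end Arc

section Harm
open Set Filter Topology
variable {X : Type*} [CircularOrder X] [TopologicalSpace X]

lemma M_arc_preconn (M : MonotoneMobius X) {a b m : X} (hab : a ≠ b) (hm : sbtw b m a) :
    IsPreconnected {p : X | btw a p b} := by
  rw [isPreconnected_iff_subset_of_fully_disjoint_closed (M_isClosed_arc M hab)]
  intro u v hu hv hcov hdisj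
  set u' := u ∩ {p : X | btw a p b} with hu'def
  set v' := v ∩ {p : X | btw a p b} with hv'def
  have hu' : IsClosed u' := hu.inter (M_isClosed_arc M hab)
  have hv' : IsClosed v' := hv.inter (M_isClosed_arc M hab)
  have hus : u' ⊆ {p : X | btw a p b} := Set.inter_subset_right
  have hvs : v' ⊆ {p : X | btw a p b} := Set.inter_subset_right
  have hcov' : {p : X | btw a p b} ⊆ u' ∪ v' := by
    intro p hp
    rcases hcov hp with h | h
    · exact Or.inl ⟨h, hp⟩
    · exact Or.inr ⟨h, hp⟩
  have hdisj' : Disjoint u' v' := hdisj.mono Set.inter_subset_left Set.inter_subset_left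
  have hamem : a ∈ {p : X | btw a p b} := btw_rfl_left
  have step : ∀ w₁ w₂ : Set X, IsClosed w₁ → IsClosed w₂ → w₁ ⊆ {p : X | btw a p b} →
      w₂ ⊆ {p : X | btw a p b} → {p : X | btw a p b} ⊆ w₁ ∪ w₂ → Disjoint w₁ w₂ →
      a ∈ w₁ → {p : X | btw a p b} ⊆ w₁ ∨ {p : X | btw a p b} ⊆ w₂ :=
    fun w₁ w₂ c1 c2 s1 s2 cov dis ha =>
      M_arc_preconn_aux M hab hm c1 c2 s1 s2 cov dis ha
  rcases hcov' hamem with ha | ha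
  · rcases step u' v' hu' hv' hus hvs hcov' hdisj' ha with h | h
    · exact Or.inl (h.trans Set.inter_subset_left)
    · exact Or.inr (h.trans Set.inter_subset_left)
  · rcases step v' u' hv' hu' hvs hus (by rwa [Set.union_comm]) hdisj'.symm ha with h | h
    · exact Or.inr (h.trans Set.inter_subset_left)
    · exact Or.inl (h.trans Set.inter_subset_left)

lemma M_harmonic_of_eq (M : MonotoneMobius X) {ω x y zz uu : X}
    (hx : ω ≠ x) (hy : ω ≠ y) (hz : ω ≠ zz) (hu : ω ≠ uu)
    (heq : M.D ω x zz * M.D ω y uu = M.D ω x uu * M.D ω y zz) :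
    M.Harmonic x y zz uu := by
  intro ω' h1 h2 h3 h4
  rcases eq_or_ne ω' ω with rfl | hne
  · exact heq
  · obtain ⟨c, hc, hf⟩ := M.inversion ω ω' hne.symm
    have px : 0 < M.D ω x ω' := M.pos ω x ω' h1.symm hx.symm hne
    have py : 0 < M.D ω y ω' := M.pos ω y ω' h2.symm hy.symm hne
    have pz : 0 < M.D ω zz ω' := M.pos ω zz ω' h3.symm hz.symm hne
    have pu : 0 < M.D ω uu ω' := M.pos ω uu ω' h4.symm hu.symm hne
    rw [hf x zz hx.symm hz.symm h1.symm h3.symm, hf y uu hy.symm hu.symm h2.symm h4.symm,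
      hf x uu hx.symm hu.symm h1.symm h4.symm, hf y zz hy.symm hz.symm h2.symm h3.symm]
    field_simp
    linear_combination heq

lemma harm_swap {M : MonotoneMobius X} {x y zz uu : X} (h : M.Harmonic x y zz uu) :
    M.Harmonic x y uu zz := fun ω h1 h2 h3 h4 => (h ω h1 h2 h4 h3).symm

end Harm

section Core
open Set Filter Topology
variable {X : Type*} [CircularOrder X] [TopologicalSpace X]

lemma M_core (M : MonotoneMobius X) {z u z' u' : X} (hcyc : Cyc4 z z' u' u) :
    ∃ x y : X, x ≠ y ∧ x ≠ z ∧ x ≠ u ∧ x ≠ z' ∧ x ≠ u' ∧ y ≠ z ∧ y ≠ u ∧ y ≠ z' ∧ y ≠ u' ∧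
      M.Harmonic x y z u ∧ M.Harmonic x y z' u' := by
  haveI := M_infinite M
  haveI := M_t2 M
  haveI := M_compact M
  obtain ⟨h1, h2, h3, h4⟩ := hcyc
  have nzz' := my_sbtw_ne₁₂ h1
  have nz'u' := my_sbtw_ne₂₃ h1
  have nzu' := my_sbtw_ne₁₃ h1
  have nz'u := my_sbtw_ne₁₃ h2
  have nu'u := my_sbtw_ne₂₃ h2
  have nuz := my_sbtw_ne₂₃ h3
  set A := {p : X | btw z' p u'} with hA
  set B := {p : X | btw u p z} with hB
  obtain ⟨ω, hω⟩ := M_arc_nonempty M nzz'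
  have hωA : ω ∉ A := fun h => cyc4_disj2a ⟨h1,h2,h3,h4⟩ hω h
  have hωB : ω ∉ B := fun h => cyc4_disj2b ⟨h1,h2,h3,h4⟩ hω h
  have hωz : ω ≠ z := (my_sbtw_ne₁₂ hω).symm
  have hωz' : ω ≠ z' := my_sbtw_ne₂₃ hω
  have hzA : z ∉ A := fun h => cyc4_disj ⟨h1,h2,h3,h4⟩ h btw_rfl_right
  have huA : u ∉ A := fun h => cyc4_disj ⟨h1,h2,h3,h4⟩ h btw_rfl_left
  have hz'B : z' ∉ B := fun h => cyc4_disj ⟨h1,h2,h3,h4⟩ btw_rfl_left h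
  have hu'B : u' ∉ B := fun h => cyc4_disj ⟨h1,h2,h3,h4⟩ btw_rfl_right h
  have hABdisj : ∀ p, p ∈ A → p ∈ B → False := fun p hp hq => cyc4_disj ⟨h1,h2,h3,h4⟩ hp hq
  have hωu : ω ≠ u := fun h => hωB (by rw [h]; exact btw_rfl_left)
  have hωu' : ω ≠ u' := fun h => hωA (by rw [h]; exact btw_rfl_right)
  have hz'A : z' ∈ A := btw_rfl_left
  have hu'A : u' ∈ A := btw_rfl_right
  have huB : u ∈ B := btw_rfl_left
  have hzB : z ∈ B := btw_rfl_right
  have hsbtw_zz'u : sbtw z z' u := sbtw_cyclic_left h4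
  have hBconn : IsPreconnected B := M_arc_preconn M nuz hsbtw_zz'u
  have hu'zz' : sbtw u' z z' := sbtw_cyclic_left (sbtw_cyclic_left h1)
  have hu'uz' : sbtw u' u z' := sbtw_trans_right h3 hu'zz'
  have hAconn : IsPreconnected A := M_arc_preconn M nz'u' hu'uz'
  -- the function whose zero (in y) defines the perpendicular foot
  set g : X → X → ℝ := fun x y => M.D ω z x * M.D ω u y - M.D ω u x * M.D ω z y with hgdef
  have hxA_ne : ∀ x ∈ A, x ≠ ω ∧ x ≠ z ∧ x ≠ u := by
    intro x hx
    exact ⟨fun h => hωA (h ▸ hx), fun h => hzA (h ▸ hx), fun h => huA (h ▸ hx)⟩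
  have hyB_ne : ∀ y ∈ B, y ≠ ω ∧ y ≠ z' ∧ y ≠ u' := by
    intro y hy
    exact ⟨fun h => hωB (h ▸ hy), fun h => hz'B (h ▸ hy), fun h => hu'B (h ▸ hy)⟩
  have hgcontB : ∀ x : X, ContinuousOn (fun y => g x y) B := by
    intro x y hy
    have hyw : y ≠ ω := (hyB_ne y hy).1
    exact ((continuousAt_const.mul (M_contAt M hωu.symm hyw)).sub
      (continuousAt_const.mul (M_contAt M hωz.symm hyw))).continuousWithinAt
  have hgu : ∀ x ∈ A, g x u < 0 := by
    intro x hx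
    obtain ⟨hxw, hxz, hxu⟩ := hxA_ne x hx
    have p1 : 0 < M.D ω u x := M.pos ω u x hxu.symm hωu.symm hxw
    have p2 : 0 < M.D ω z u := M.pos ω z u nuz.symm hωz.symm hωu.symm
    show M.D ω z x * M.D ω u u - M.D ω u x * M.D ω z u < 0
    rw [M.refl, mul_zero]
    nlinarith
  have hgz : ∀ x ∈ A, 0 < g x z := by
    intro x hx
    obtain ⟨hxw, hxz, hxu⟩ := hxA_ne x hx
    have p1 : 0 < M.D ω z x := M.pos ω z x hxz.symm hωz.symm hxw
    have p2 : 0 < M.D ω u z := M.pos ω u z nuz hωu.symm hωz.symm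
    show 0 < M.D ω z x * M.D ω u z - M.D ω u x * M.D ω z z
    rw [M.refl, mul_zero]
    nlinarith
  -- uniqueness of the zero
  have huniq : ∀ x, x ∈ A → ∀ y₁, y₁ ∈ B → g x y₁ = 0 → ∀ y₂, y₂ ∈ B → g x y₂ = 0 →
      y₁ = y₂ := by
    intro x hx
    obtain ⟨hxw, hxz, hxu⟩ := hxA_ne x hx
    have key : ∀ y₁, y₁ ∈ B → g x y₁ = 0 → ∀ y₂, y₂ ∈ B → g x y₂ = 0 →
        btw u y₁ y₂ → y₁ = y₂ := by
      intro y₁ hy₁ hz₁ y₂ hy₂ hz₂ hbtw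
      by_contra hne
      have hy₁w := (hyB_ne y₁ hy₁).1
      have hy₂w := (hyB_ne y₂ hy₂).1
      have hy₁u : y₁ ≠ u := by
        intro h; rw [h] at hz₁; linarith [hgu x hx]
      have hy₁z : y₁ ≠ z := by
        intro h; rw [h] at hz₁; linarith [hgz x hx]
      have hy₂u : y₂ ≠ u := by
        intro h; rw [h] at hz₂; linarith [hgu x hx]
      have hy₂z : y₂ ≠ z := by
        intro h; rw [h] at hz₂; linarith [hgz x hx]
      have s₂ : sbtw u y₂ z := my_strictify hy₂ hy₂u.symm hy₂z nuz
      have s12 : sbtw u y₁ y₂ := my_strictify hbtw hy₁u.symm hne hy₂u.symm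
      have hsep : PairSeparates u y₂ y₁ z := Or.inl ⟨s12, sbtw_cyclic_left s₂⟩
      have hmono := (M.mono ω u y₂ y₁ z hωu.symm hy₂w hy₁w hωz.symm hsep).1
      -- hmono : M.D ω u y₁ * M.D ω y₂ z < M.D ω u y₂ * M.D ω y₁ z
      have e1 : M.D ω z x * M.D ω u y₁ = M.D ω u x * M.D ω z y₁ := by
        have : g x y₁ = 0 := hz₁
        simp only [hgdef] at this
        linarith
      have e2 : M.D ω z x * M.D ω u y₂ = M.D ω u x * M.D ω z y₂ := by
        have : g x y₂ = 0 := hz₂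
        simp only [hgdef] at this
        linarith
      have pzx : 0 < M.D ω z x := M.pos ω z x hxz.symm hωz.symm hxw
      have ecan : M.D ω z x * (M.D ω u y₁ * M.D ω z y₂)
          = M.D ω z x * (M.D ω u y₂ * M.D ω z y₁) := by
        linear_combination (M.D ω z y₂) * e1 - (M.D ω z y₁) * e2
      have he := mul_left_cancel₀ (ne_of_gt pzx) ecan
      rw [M.symm ω y₂ z, M.symm ω y₁ z] at hmono
      linarith
    intro y₁ hy₁ hz₁ y₂ hy₂ hz₂
    rcases btw_total u y₁ y₂ with hb | hb
    · exact key y₁ hy₁ hz₁ y₂ hy₂ hz₂ hb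
    · exact (key y₂ hy₂ hz₂ y₁ hy₁ hz₁ (btw_cyclic_left (btw_cyclic_left hb))).symm
  -- the foot map
  have hex : ∀ x : X, ∃ y : X, x ∈ A → (y ∈ B ∧ g x y = 0) := by
    intro x
    by_cases hx : x ∈ A
    · have hIcc := hBconn.intermediate_value huB hzB (hgcontB x)
      have h0 : (0:ℝ) ∈ Icc (g x u) (g x z) := ⟨(hgu x hx).le, (hgz x hx).le⟩
      obtain ⟨y, hyB, hy⟩ := hIcc h0
      exact ⟨y, fun _ => ⟨hyB, hy⟩⟩
    · exact ⟨z, fun h => absurd h hx⟩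
  choose f hf using hex
  have hfB : ∀ x ∈ A, f x ∈ B := fun x hx => (hf x hx).1
  have hf0 : ∀ x ∈ A, g x (f x) = 0 := fun x hx => (hf x hx).2
  -- continuity of the foot map
  have hfcont : ContinuousOn f A := by
    intro x₀ hx₀
    have hx₀w := (hxA_ne x₀ hx₀).1
    show Tendsto f (𝓝[A] x₀) (𝓝 (f x₀))
    rw [tendsto_nhds]
    intro V hVopen hVmem
    have hKcc : IsCompact (B ∩ Vᶜ) :=
      ((M_isClosed_arc M nuz).inter hVopen.isClosed_compl).isCompact
    have hPev : ∀ y ∈ B ∩ Vᶜ, ∀ᶠ p : X × X in 𝓝 (x₀, y), g p.1 p.2 ≠ 0 := by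
      intro y hy
      have hyw : y ≠ ω := (hyB_ne y hy.1).1
      have hCont : ContinuousAt (fun p : X × X => g p.1 p.2) (x₀, y) := by
        have c1 : ContinuousAt (fun p : X × X => M.D ω z p.1) (x₀, y) :=
          (M_contAt M hωz.symm hx₀w).comp continuousAt_fst
        have c2 : ContinuousAt (fun p : X × X => M.D ω u p.2) (x₀, y) :=
          (M_contAt M hωu.symm hyw).comp continuousAt_snd
        have c3 : ContinuousAt (fun p : X × X => M.D ω u p.1) (x₀, y) :=
          (M_contAt M hωu.symm hx₀w).comp continuousAt_fst
        have c4 : ContinuousAt (fun p : X × X => M.D ω z p.2) (x₀, y) :=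
          (M_contAt M hωz.symm hyw).comp continuousAt_snd
        exact (c1.mul c2).sub (c3.mul c4)
      have hne0 : g x₀ y ≠ 0 := by
        intro h0
        have heq := huniq x₀ hx₀ (f x₀) (hfB x₀ hx₀) (hf0 x₀ hx₀) y hy.1 h0
        exact hy.2 (heq ▸ hVmem)
      exact hCont.eventually_ne hne0
    have hev := hKcc.eventually_forall_of_forall_eventually (P := fun a b => g a b ≠ 0) hPev
    filter_upwards [mem_nhdsWithin_of_mem_nhds hev, self_mem_nhdsWithin] with x hx hxA
    by_contra hfV
    exact hx (f x) ⟨hfB x hxA, hfV⟩ (hf0 x hxA)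
  -- the second residual function
  set H : X → ℝ := fun x => M.D ω z' x * M.D ω u' (f x) - M.D ω u' x * M.D ω z' (f x)
    with hHdef
  have hfne : ∀ x ∈ A, f x ≠ ω ∧ f x ≠ z' ∧ f x ≠ u' := fun x hx => hyB_ne (f x) (hfB x hx)
  have hHcont : ContinuousOn H A := by
    intro x hx
    have hxw := (hxA_ne x hx).1
    have hfxw := (hfne x hx).1
    exact ((M_contAt M hωz'.symm hxw).continuousWithinAt.mul
      ((M_contAt M hωu'.symm hfxw).comp_continuousWithinAt (hfcont x hx))).sub
      ((M_contAt M hωu'.symm hxw).continuousWithinAt.mul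
      ((M_contAt M hωz'.symm hfxw).comp_continuousWithinAt (hfcont x hx)))
  have hHz' : H z' < 0 := by
    have hfz' := hfne z' hz'A
    have p1 : 0 < M.D ω u' z' := M.pos ω u' z' nz'u'.symm hωu'.symm hωz'.symm
    have p2 : 0 < M.D ω z' (f z') := M.pos ω z' (f z') (hfz'.2.1).symm hωz'.symm hfz'.1
    show M.D ω z' z' * M.D ω u' (f z') - M.D ω u' z' * M.D ω z' (f z') < 0
    rw [M.refl, zero_mul]
    nlinarith
  have hHu' : 0 < H u' := by
    have hfu' := hfne u' hu'A
    have p1 : 0 < M.D ω z' u' := M.pos ω z' u' nz'u' hωz'.symm hωu'.symm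
    have p2 : 0 < M.D ω u' (f u') := M.pos ω u' (f u') (hfu'.2.2).symm hωu'.symm hfu'.1
    show 0 < M.D ω z' u' * M.D ω u' (f u') - M.D ω u' u' * M.D ω z' (f u')
    rw [M.refl, zero_mul]
    nlinarith
  obtain ⟨x₀, hx₀A, hH0⟩ : ∃ x₀ ∈ A, H x₀ = 0 := by
    have hIcc := hAconn.intermediate_value hz'A hu'A hHcont
    have h0 : (0:ℝ) ∈ Icc (H z') (H u') := ⟨hHz'.le, hHu'.le⟩
    obtain ⟨x₀, hx₀A, hx₀⟩ := hIcc h0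
    exact ⟨x₀, hx₀A, hx₀⟩
  obtain ⟨hx₀w, hx₀z, hx₀u⟩ := hxA_ne x₀ hx₀A
  set y₀ := f x₀ with hy₀def
  have hy₀B : y₀ ∈ B := hfB x₀ hx₀A
  obtain ⟨hy₀w, hy₀z', hy₀u'⟩ := hyB_ne y₀ hy₀B
  have hg0 : g x₀ y₀ = 0 := hf0 x₀ hx₀A
  have hy₀u : y₀ ≠ u := by
    intro h; rw [h] at hg0; linarith [hgu x₀ hx₀A]
  have hy₀z : y₀ ≠ z := by
    intro h; rw [h] at hg0; linarith [hgz x₀ hx₀A]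
  have hx₀z' : x₀ ≠ z' := by
    intro h; rw [h] at hH0; linarith
  have hx₀u' : x₀ ≠ u' := by
    intro h; rw [h] at hH0; linarith
  have hx₀y₀ : x₀ ≠ y₀ := fun h => hABdisj x₀ hx₀A (h ▸ hy₀B)
  -- harmonicity
  have heq1 : M.D ω x₀ z * M.D ω y₀ u = M.D ω x₀ u * M.D ω y₀ z := by
    have e : M.D ω z x₀ * M.D ω u y₀ - M.D ω u x₀ * M.D ω z y₀ = 0 := hg0
    rw [M.symm ω x₀ z, M.symm ω y₀ u, M.symm ω x₀ u, M.symm ω y₀ z]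
    linarith
  have heq2 : M.D ω x₀ z' * M.D ω y₀ u' = M.D ω x₀ u' * M.D ω y₀ z' := by
    have e : M.D ω z' x₀ * M.D ω u' y₀ - M.D ω u' x₀ * M.D ω z' y₀ = 0 := hH0
    rw [M.symm ω x₀ z', M.symm ω y₀ u', M.symm ω x₀ u', M.symm ω y₀ z']
    linarith
  refine ⟨x₀, y₀, hx₀y₀, hx₀z, hx₀u, hx₀z', hx₀u', hy₀z, hy₀u, hy₀z', hy₀u', ?_, ?_⟩
  · exact M_harmonic_of_eq M hx₀w.symm hy₀w.symm hωz hωu heq1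
  · exact M_harmonic_of_eq M hx₀w.symm hy₀w.symm hωz' hωu' heq2
end Core

section Final
open Set
variable {X : Type*} [CircularOrder X] [TopologicalSpace X]

abbrev MGoal (M : MonotoneMobius X) (z u z' u' : X) : Prop :=
  ∃ x y : X, x ≠ y ∧ x ≠ z ∧ x ≠ u ∧ x ≠ z' ∧ x ≠ u' ∧ y ≠ z ∧ y ≠ u ∧ y ≠ z' ∧ y ≠ u' ∧
    M.Harmonic x y z u ∧ M.Harmonic x y z' u'

lemma MGoal_swap12 {M : MonotoneMobius X} {z u z' u' : X} (h : MGoal M u z z' u') :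
    MGoal M z u z' u' := by
  obtain ⟨x,y,a0,a1,a2,a3,a4,b1,b2,b3,b4,c1,c2⟩ := h
  exact ⟨x,y,a0,a2,a1,a3,a4,b2,b1,b3,b4, harm_swap c1, c2⟩

lemma MGoal_swap34 {M : MonotoneMobius X} {z u z' u' : X} (h : MGoal M z u u' z') :
    MGoal M z u z' u' := by
  obtain ⟨x,y,a0,a1,a2,a3,a4,b1,b2,b3,b4,c1,c2⟩ := h
  exact ⟨x,y,a0,a1,a2,a4,a3,b1,b2,b4,b3,c1, harm_swap c2⟩

lemma MGoal_pairs {M : MonotoneMobius X} {z u z' u' : X} (h : MGoal M z' u' z u) :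
    MGoal M z u z' u' := by
  obtain ⟨x,y,a0,a1,a2,a3,a4,b1,b2,b3,b4,c1,c2⟩ := h
  exact ⟨x,y,a0,a3,a4,a1,a2,b3,b4,b1,b2,c2,c1⟩
end Final

/-- Let `M` be a monotone Möbius structure on the circle and let
`b = (z,u)`, `b' = (z',u')` be two pairs of distinct points of the circle in the strong
causal relation. Then there exists a common perpendicular: a pair `a = (x,y)` such that both
`(a,b)` and `(a,b')` are harmonic. -/
theorem stmt10 {X : Type*} [CircularOrder X] [TopologicalSpace X]
    (M : MonotoneMobius X) (z u z' u' : X)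
    (hzu : z ≠ u) (hzu' : z' ≠ u')
    (hsc : StrongCausal z u z' u') :
    ∃ x y : X, x ≠ y ∧
      x ≠ z ∧ x ≠ u ∧ x ≠ z' ∧ x ≠ u' ∧ y ≠ z ∧ y ≠ u ∧ y ≠ z' ∧ y ≠ u' ∧
      M.Harmonic x y z u ∧ M.Harmonic x y z' u' := by
  have case1 : ∀ Z U Z' U' : X, Z' ≠ U' → sbtw Z Z' U → sbtw Z U' U → MGoal M Z U Z' U' := by
    intro Z U Z' U' hne s1 s2
    rcases btw_total Z Z' U' with t | t
    · exact M_core M (cyc4_build s1 s2 t hne)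
    · have t' : btw Z U' Z' := btw_cyclic_left (btw_cyclic_left t)
      exact MGoal_swap34 (M_core M (cyc4_build s2 s1 t' hne.symm))
  rcases hsc with ⟨s1,s2⟩ | ⟨s1,s2⟩ | ⟨s1,s2⟩ | ⟨s1,s2⟩
  · exact case1 z u z' u' hzu' s1 s2
  · exact MGoal_swap12 (case1 u z z' u' hzu' s1 s2)
  · exact MGoal_pairs (case1 z' u' z u hzu s1 s2)
  · exact MGoal_pairs (MGoal_swap12 (case1 u' z' z u hzu s1 s2))
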